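/- Let (η_k)_{k≥1} be the points of a rate-1 Poisson point process on (0,∞) listed in increasing order, and Z(β)=Σ_k η_k^{-β}. Then almost surely the limit lim_{β↓1} (Z(β) - ζ(β)) exists and is finite; consequently Z(β) = 1/(β-1) + W + o(1) a.s. as β↓1 for some random variable W. -/

import Mathlib

open MeasureTheory ProbabilityTheory Real Filter Set Topology

open scoped ENNReal NNReal

noncomputable def expD : ℝ → ℝ := fun x => if 0 ≤ x then Real.exp (-x) else 0

lemma expD_nonneg (x : ℝ) : 0 ≤ expD x := by
  unfold expD; split_ifs <;> positivity

lemma measurable_expD : Measurable expD := by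
  unfold expD
  exact Measurable.ite measurableSet_Ici (measurable_id.neg.exp) measurable_const

lemma expMeasure_eq : expMeasure 1 =
    (volume : Measure ℝ).withDensity (fun x => ((expD x).toNNReal : ℝ≥0∞)) := by
  show gammaMeasure 1 1 = _
  unfold gammaMeasure
  congr 1
  funext x
  rw [gammaPDF_eq]
  unfold expD
  rw [ENNReal.ofReal]
  congr 1
  split_ifs with h
  · simp [Real.Gamma_one]
  · rfl

lemma mul_expD_eq (g : ℝ → ℝ) :
    (fun x => expD x * g x) = Set.indicator (Ici 0) (fun x => Real.exp (-x) * g x) := by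
  funext x
  rw [Set.indicator_apply]
  unfold expD
  by_cases h : (0:ℝ) ≤ x <;> simp [h, mem_Ici]

lemma integral_expMeasure (g : ℝ → ℝ) :
    ∫ x, g x ∂(expMeasure 1) = ∫ x in Ioi 0, Real.exp (-x) * g x := by
  rw [expMeasure_eq, integral_withDensity_eq_integral_smul
    (measurable_expD.real_toNNReal) g]
  have : (fun x => (expD x).toNNReal • g x) = fun x => expD x * g x := by
    funext x
    rw [NNReal.smul_def, Real.coe_toNNReal _ (expD_nonneg x), smul_eq_mul]
  rw [this, mul_expD_eq g, integral_indicator measurableSet_Ici,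
    integral_Ici_eq_integral_Ioi]

lemma integrable_expMeasure {g : ℝ → ℝ}
    (hg : IntegrableOn (fun x => Real.exp (-x) * g x) (Ioi 0)) :
    Integrable g (expMeasure 1) := by
  rw [expMeasure_eq, integrable_withDensity_iff_integrable_smul
    (measurable_expD.real_toNNReal)]
  have : (fun x => (expD x).toNNReal • g x) = fun x => expD x * g x := by
    funext x
    rw [NNReal.smul_def, Real.coe_toNNReal _ (expD_nonneg x), smul_eq_mul]
  rw [this, mul_expD_eq g, integrable_indicator_iff measurableSet_Ici,
    integrableOn_Ici_iff_integrableOn_Ioi]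
  exact hg

lemma integral_id_expMeasure : ∫ x, x ∂(expMeasure 1) = 1 := by
  rw [integral_expMeasure]
  have h2 : (0:ℝ) < 2 := by norm_num
  have := Real.Gamma_eq_integral h2
  rw [Real.Gamma_two] at this
  rw [this]
  refine setIntegral_congr_fun measurableSet_Ioi (fun x hx => ?_)
  rw [show (2:ℝ) - 1 = 1 by norm_num, Real.rpow_one]

lemma integral_sq_expMeasure : ∫ x, x ^ 2 ∂(expMeasure 1) = 2 := by
  rw [integral_expMeasure]
  have h3 : (0:ℝ) < 3 := by norm_num
  have := Real.Gamma_eq_integral h3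
  have h32 : Real.Gamma 3 = 2 := by
    rw [show (3:ℝ) = (2:ℕ) + 1 by norm_num, Real.Gamma_nat_eq_factorial]
    norm_num
  rw [h32] at this
  rw [this]
  refine setIntegral_congr_fun measurableSet_Ioi (fun x hx => ?_)
  rw [show (3:ℝ) - 1 = ((2:ℕ):ℝ) by norm_num, Real.rpow_natCast]

lemma integrableOn_exp_sq : IntegrableOn (fun x : ℝ => Real.exp (-x) * x ^ 2) (Ioi 0) := by
  have := Real.GammaIntegral_convergent (show (0:ℝ) < 3 by norm_num)
  refine this.congr_fun (fun x hx => ?_) measurableSet_Ioi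
  rw [show (3:ℝ) - 1 = ((2:ℕ):ℝ) by norm_num]; simp only [Real.rpow_natCast]

lemma memLp_id_expMeasure : MemLp (fun x : ℝ => x) 2 (expMeasure 1) := by
  have h : IsProbabilityMeasure (expMeasure 1) :=
    isProbabilityMeasure_expMeasure one_pos
  show MemLp id 2 (expMeasure 1)
  rw [memLp_two_iff_integrable_sq measurable_id.aestronglyMeasurable]
  exact (integrable_expMeasure integrableOn_exp_sq).congr
    (ae_of_all _ (fun x => rfl))

lemma expMeasure_Iic_zero : expMeasure 1 (Iic (0:ℝ)) = 0 := by
  rw [expMeasure_eq, withDensity_apply _ measurableSet_Iic]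
  rw [setLIntegral_congr (Iio_ae_eq_Iic (a := (0:ℝ))).symm]
  rw [setLIntegral_congr_fun measurableSet_Iio
    (fun x (hx : x < 0) => ?_), lintegral_zero]
  unfold expD
  rw [if_neg (not_le.mpr hx)]
  simp

set_option linter.unusedSectionVars false

section transfer
variable {Ω : Type*} [MeasureSpace Ω] [IsProbabilityMeasure (ℙ : Measure Ω)]
  {X : Ω → ℝ} (hX : Measurable X) (hd : Measure.map X ℙ = expMeasure 1)

include hX hd

lemma memLp_two_of_exp : MemLp X 2 ℙ := by
  have : MemLp (id : ℝ → ℝ) 2 (Measure.map X ℙ) := by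
    rw [hd]; exact memLp_id_expMeasure
  exact (memLp_map_measure_iff measurable_id.aestronglyMeasurable
    hX.aemeasurable).mp this

lemma integral_of_exp : ∫ ω, X ω ∂ℙ = 1 := by
  have : ∫ x, x ∂(Measure.map X ℙ) = 1 := by rw [hd]; exact integral_id_expMeasure
  rwa [integral_map (f := fun x => x) hX.aemeasurable measurable_id.aestronglyMeasurable] at this

lemma integral_sq_of_exp : ∫ ω, X ω ^ 2 ∂ℙ = 2 := by
  have : ∫ x, x ^ 2 ∂(Measure.map X ℙ) = 2 := by rw [hd]; exact integral_sq_expMeasure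
  rwa [integral_map (f := fun x => x ^ 2) hX.aemeasurable
    (measurable_id.pow_const 2).aestronglyMeasurable] at this

lemma variance_of_exp : variance X ℙ = 1 := by
  rw [variance_eq_sub (memLp_two_of_exp hX hd)]
  have h1 : (ℙ : Measure Ω)[X ^ 2] = 2 := by
    rw [show (X ^ 2) = fun ω => X ω ^ 2 from rfl]
    exact integral_sq_of_exp hX hd
  rw [h1, integral_of_exp hX hd]
  norm_num

lemma pos_of_exp : ∀ᵐ ω ∂ℙ, 0 < X ω := by
  have h0 : (ℙ : Measure Ω) {ω | X ω ≤ 0} = 0 := by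
    have : {ω | X ω ≤ 0} = X ⁻¹' (Iic 0) := rfl
    rw [this, ← Measure.map_apply hX measurableSet_Iic, hd, expMeasure_Iic_zero]
  filter_upwards [measure_eq_zero_iff_ae_notMem.mp h0] with ω hω
  exact not_le.mp hω

end transfer

lemma summable_shift_rpow {c : ℝ} (hc : c < -1) :
    Summable (fun n : ℕ => ((n:ℝ) + 1) ^ c) := by
  have h := Real.summable_nat_rpow.mpr hc
  have h2 := (summable_nat_add_iff 1).mpr h
  refine h2.congr (fun n => ?_)
  push_cast
  rfl

section prob
set_option linter.unusedSectionVars false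
variable {Ω : Type*} [MeasureSpace Ω] [IsProbabilityMeasure (ℙ : Measure Ω)]
  (E : ℕ → Ω → ℝ) (hmeas : ∀ i, Measurable (E i))
  (hindep : iIndepFun E ℙ)
  (hdist : ∀ i, Measure.map (E i) ℙ = expMeasure 1)

include hmeas hdist in
lemma S_memLp (n : ℕ) : MemLp (∑ i ∈ Finset.range n, E i) 2 ℙ :=
  memLp_finset_sum' _ (fun i _ => memLp_two_of_exp (hmeas i) (hdist i))

include hmeas hdist in
lemma S_integral (n : ℕ) : ∫ ω, (∑ i ∈ Finset.range n, E i) ω ∂ℙ = (n:ℝ) := by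
  simp only [Finset.sum_apply]
  rw [integral_finset_sum _ (fun i _ =>
    (memLp_two_of_exp (hmeas i) (hdist i)).integrable one_le_two)]
  rw [Finset.sum_congr rfl (fun i _ => integral_of_exp (hmeas i) (hdist i))]
  simp

include hmeas hindep hdist in
lemma S_variance (n : ℕ) : variance (∑ i ∈ Finset.range n, E i) ℙ = n := by
  rw [IndepFun.variance_sum (fun i _ => memLp_two_of_exp (hmeas i) (hdist i))
    (fun i _ j _ hij => hindep.indepFun hij)]
  rw [Finset.sum_congr rfl (fun i _ => variance_of_exp (hmeas i) (hdist i))]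
  simp

include hmeas hindep hdist in
lemma S_chebyshev (n : ℕ) {c : ℝ} (hc : 0 < c) :
    (ℙ : Measure Ω) {ω | c ≤ |(∑ i ∈ Finset.range n, E i ω) - n|} ≤
      ENNReal.ofReal (n / c ^ 2) := by
  have h := meas_ge_le_variance_div_sq (S_memLp E hmeas hdist n) hc
  rw [S_variance E hmeas hindep hdist n] at h
  have hi : ∫ x, (∑ i ∈ Finset.range n, E i) x ∂ℙ = (n:ℝ) := S_integral E hmeas hdist n
  rw [hi] at h
  refine le_trans (le_of_eq ?_) h
  congr 1
  funext ω
  simp [Finset.sum_apply]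

include hmeas hindep hdist in
lemma S_dev_ae : ∀ᵐ ω ∂ℙ, ∀ᶠ m : ℕ in atTop,
    |(∑ i ∈ Finset.range ((m+1)^2), E i ω) - ((((m+1)^2 : ℕ)):ℝ)| < ((m:ℝ)+1) ^ (1.8:ℝ) := by
  set A : ℕ → Set Ω := fun m => {ω | ((m:ℝ)+1) ^ (1.8:ℝ) ≤
    |(∑ i ∈ Finset.range ((m+1)^2), E i ω) - ((((m+1)^2 : ℕ)):ℝ)|} with hAdef
  have hA : ∀ m, (ℙ : Measure Ω) (A m) ≤ ENNReal.ofReal (((m:ℝ)+1) ^ (-1.6:ℝ)) := by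
    intro m
    have ht : (0:ℝ) < (m:ℝ)+1 := by positivity
    have hc : (0:ℝ) < ((m:ℝ)+1) ^ (1.8:ℝ) := Real.rpow_pos_of_pos ht _
    refine le_trans (S_chebyshev E hmeas hindep hdist ((m+1)^2) hc) (le_of_eq ?_)
    congr 1
    have h1 : ((((m+1)^2 : ℕ)):ℝ) = ((m:ℝ)+1) ^ ((2:ℕ):ℝ) := by
      rw [Real.rpow_natCast]
      push_cast
      ring
    have h2 : (((m:ℝ)+1) ^ (1.8:ℝ)) ^ 2 = ((m:ℝ)+1) ^ (3.6:ℝ) := by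
      rw [← Real.rpow_natCast (((m:ℝ)+1) ^ (1.8:ℝ)) 2, ← Real.rpow_mul ht.le]
      norm_num
    rw [h1, h2, ← Real.rpow_sub ht]
    norm_num
  have hsum : ∑' m, (ℙ : Measure Ω) (A m) ≠ ⊤ := by
    refine ne_top_of_le_ne_top ?_ (ENNReal.tsum_le_tsum hA)
    rw [← ENNReal.ofReal_tsum_of_nonneg (fun m => Real.rpow_nonneg (by positivity) _)
      (summable_shift_rpow (by norm_num))]
    exact ENNReal.ofReal_ne_top
  have h0 := measure_limsup_atTop_eq_zero hsum
  rw [measure_eq_zero_iff_ae_notMem] at h0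
  filter_upwards [h0] with ω hω
  have h2 : ∀ᶠ m in atTop, ω ∉ A m := by
    rw [mem_limsup_iff_frequently_mem] at hω
    exact Filter.not_frequently.mp hω
  filter_upwards [h2] with m hm
  simp only [hAdef, mem_setOf_eq] at hm
  exact not_le.mp hm

set_option maxHeartbeats 1000000 in
include hmeas hindep hdist in
lemma eta_structure_ae : ∀ᵐ ω ∂ℙ,
    (∀ k : ℕ, 0 < ∑ i ∈ Finset.range (k+1), E i ω) ∧
    ∃ C : ℝ, 1 ≤ C ∧ ∀ k : ℕ,
      |(∑ i ∈ Finset.range (k+1), E i ω) - ((k:ℝ)+1)| ≤ C * ((k:ℝ)+1) ^ (0.9:ℝ) := by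
  have hpos : ∀ᵐ ω ∂ℙ, ∀ i, 0 < E i ω :=
    ae_all_iff.mpr (fun i => pos_of_exp (hmeas i) (hdist i))
  filter_upwards [hpos, S_dev_ae E hmeas hindep hdist] with ω hωpos hωdev
  set S : ℕ → ℝ := fun n => ∑ i ∈ Finset.range n, E i ω with hSdef
  have hSmono : Monotone S := by
    intro a b hab
    exact Finset.sum_le_sum_of_subset_of_nonneg
      (Finset.range_subset_range.mpr hab) (fun i _ _ => (hωpos i).le)
  obtain ⟨M, hM⟩ := eventually_atTop.mp hωdev
  -- main claim
  have claim : ∀ n : ℕ, (M+1)^2 ≤ n → |S n - (n:ℝ)| ≤ 7 * (n:ℝ) ^ (0.9:ℝ) := by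
    intro n hn
    have hsqrt : M + 1 ≤ n.sqrt := Nat.le_sqrt.mpr (by nlinarith [hn])
    obtain ⟨j, hj⟩ : ∃ j : ℕ, n.sqrt = j + 1 := ⟨n.sqrt - 1, by omega⟩
    have hm1 : M + 1 ≤ j + 1 := hj ▸ hsqrt
    have hm2 : (j+1)^2 ≤ n := by rw [← hj]; exact Nat.sqrt_le' n
    have hm3 : n < (j+1+1)^2 := by rw [← hj]; exact Nat.lt_succ_sqrt' n
    have hMj : M ≤ j := by omega
    have hd1 := hM j hMj
    have hd2 := hM (j+1) (by omega)
    set s : ℝ := (j:ℝ) + 1 with hsdef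
    set t : ℝ := (n:ℝ) with htdef
    have hs1 : (1:ℝ) ≤ s := by
      simp only [hsdef]
      have := Nat.cast_nonneg (α := ℝ) j
      linarith
    have hs2t : s^2 ≤ t := by
      have := (Nat.cast_le (α := ℝ)).mpr hm2
      push_cast at this ⊢
      nlinarith
    have ht1 : (1:ℝ) ≤ t := by nlinarith
    have hts : t < (s+1)^2 := by
      have := (Nat.cast_lt (α := ℝ)).mpr hm3
      push_cast at this ⊢
      nlinarith
    -- deviation bounds with casts
    have hcast1 : ((((j+1)^2 : ℕ)):ℝ) = s^2 := by push_cast; ring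
    have hcast2 : ((((j+1+1)^2 : ℕ)):ℝ) = (s+1)^2 := by push_cast; ring
    have hb1 : |S ((j+1)^2) - s^2| < s ^ (1.8:ℝ) := by
      rw [← hcast1]; exact hd1
    have hb2 : |S ((j+1+1)^2) - (s+1)^2| < ((s+1)) ^ (1.8:ℝ) := by
      have : ((j+1:ℕ):ℝ) + 1 = s + 1 := by push_cast; ring
      rw [← hcast2, ← this]; exact hd2
    have hmono1 : S ((j+1)^2) ≤ S n := hSmono hm2
    have hmono2 : S n ≤ S ((j+1+1)^2) := hSmono hm3.le
    rw [abs_lt] at hb1 hb2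
    -- s ≤ t^0.5
    have hs_le : s ≤ t ^ (0.5:ℝ) := by
      have h := Real.rpow_le_rpow (by positivity) hs2t (by norm_num : (0:ℝ) ≤ 0.5)
      rwa [← Real.rpow_natCast s 2, ← Real.rpow_mul (by positivity),
        show ((2:ℕ):ℝ) * 0.5 = 1 by norm_num, Real.rpow_one] at h
    have ht05 : t ^ (0.5:ℝ) ≤ t ^ (0.9:ℝ) :=
      Real.rpow_le_rpow_of_exponent_le ht1 (by norm_num)
    have hs18 : s ^ (1.8:ℝ) ≤ (s+1) ^ (1.8:ℝ) :=
      Real.rpow_le_rpow (by positivity) (by linarith) (by norm_num)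
    have hsp18 : (s+1) ^ (1.8:ℝ) ≤ 4 * t ^ (0.9:ℝ) := by
      have h1 : s + 1 ≤ 2 * t ^ (0.5:ℝ) := by
        have : (1:ℝ) ≤ t ^ (0.5:ℝ) := le_trans hs1 hs_le
        linarith
      have h2 : (s+1) ^ (1.8:ℝ) ≤ (2 * t ^ (0.5:ℝ)) ^ (1.8:ℝ) :=
        Real.rpow_le_rpow (by positivity) h1 (by norm_num)
      have h3 : (2 * t ^ (0.5:ℝ)) ^ (1.8:ℝ) =
          (2:ℝ) ^ (1.8:ℝ) * (t ^ (0.5:ℝ)) ^ (1.8:ℝ) :=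
        Real.mul_rpow (by norm_num) (by positivity)
      have h4 : (t ^ (0.5:ℝ)) ^ (1.8:ℝ) = t ^ (0.9:ℝ) := by
        rw [← Real.rpow_mul (by positivity)]
        norm_num
      have h5 : (2:ℝ) ^ (1.8:ℝ) ≤ 4 := by
        have : (2:ℝ) ^ (1.8:ℝ) ≤ (2:ℝ) ^ ((2:ℕ):ℝ) :=
          Real.rpow_le_rpow_of_exponent_le one_le_two (by norm_num)
        rw [Real.rpow_natCast] at this
        norm_num at this ⊢
        linarith
      have ht09 : (0:ℝ) ≤ t ^ (0.9:ℝ) := by positivity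
      calc (s+1) ^ (1.8:ℝ) ≤ (2:ℝ) ^ (1.8:ℝ) * (t ^ (0.5:ℝ)) ^ (1.8:ℝ) := by
            rw [← h3]; exact h2
        _ = (2:ℝ) ^ (1.8:ℝ) * t ^ (0.9:ℝ) := by rw [h4]
        _ ≤ 4 * t ^ (0.9:ℝ) := mul_le_mul_of_nonneg_right h5 ht09
    have h3s : 2*s + 1 ≤ 3 * t ^ (0.9:ℝ) := by
      have : s ≤ t ^ (0.9:ℝ) := le_trans hs_le ht05
      have h1t : (1:ℝ) ≤ t ^ (0.9:ℝ) := le_trans (le_trans hs1 hs_le) ht05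
      linarith
    rw [abs_le]
    constructor
    · -- -(7 t^0.9) ≤ S n - t
      have : t - S n ≤ (2*s+1) + (s+1) ^ (1.8:ℝ) := by nlinarith [hb1.1, hmono1]
      nlinarith [hs18]
    · have : S n - t ≤ (2*s+1) + (s+1) ^ (1.8:ℝ) := by nlinarith [hb2.2, hmono2]
      nlinarith
  refine ⟨fun k => Finset.sum_pos (fun i _ => hωpos i) ⟨0, Finset.mem_range.mpr (by omega)⟩, ?_⟩
  set C : ℝ := 7 + ∑ k ∈ Finset.range ((M+1)^2), |S (k+1) - ((k:ℝ)+1)| with hCdef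
  have hsum_nonneg : 0 ≤ ∑ k ∈ Finset.range ((M+1)^2), |S (k+1) - ((k:ℝ)+1)| :=
    Finset.sum_nonneg (fun k _ => abs_nonneg _)
  refine ⟨C, by simp only [hCdef]; linarith, fun k => ?_⟩
  have hk09 : (1:ℝ) ≤ ((k:ℝ)+1) ^ (0.9:ℝ) := by
    calc (1:ℝ) = (1:ℝ) ^ (0.9:ℝ) := (Real.one_rpow _).symm
      _ ≤ ((k:ℝ)+1) ^ (0.9:ℝ) :=
        Real.rpow_le_rpow (by norm_num)
          (by have := Nat.cast_nonneg (α := ℝ) k; linarith) (by norm_num)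
  by_cases hcase : (M+1)^2 ≤ k + 1
  · have h := claim (k+1) hcase
    have hc : ((k+1:ℕ):ℝ) = (k:ℝ) + 1 := by push_cast; ring
    rw [hc] at h
    refine le_trans h ?_
    have : (7:ℝ) ≤ C := by simp only [hCdef]; linarith
    have h09 : (0:ℝ) ≤ ((k:ℝ)+1) ^ (0.9:ℝ) := by positivity
    nlinarith
  · have hk_mem : k ∈ Finset.range ((M+1)^2) := Finset.mem_range.mpr (by omega)
    have h := Finset.single_le_sum (f := fun k => |S (k+1) - ((k:ℝ)+1)|)
      (fun i _ => abs_nonneg _) hk_mem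
    have hC7 : |S (k+1) - ((k:ℝ)+1)| ≤ C := by simp only [hCdef]; linarith
    have hC0 : (0:ℝ) ≤ C := by simp only [hCdef]; linarith
    calc |S (k+1) - ((k:ℝ)+1)| ≤ C := hC7
      _ = C * 1 := (mul_one C).symm
      _ ≤ C * ((k:ℝ)+1) ^ (0.9:ℝ) := by nlinarith

end prob

lemma abs_rpow_sub_rpow_le {β m x y : ℝ} (hm : 0 < m) (hx : m ≤ x) (hy : m ≤ y)
    (hβ : 1 ≤ β) : |x ^ (-β) - y ^ (-β)| ≤ β * m ^ (-β - 1) * |x - y| := by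
  have hderiv : ∀ t ∈ Ici m, HasDerivWithinAt (fun u : ℝ => u ^ (-β))
      (-β * t ^ (-β - 1)) (Ici m) t := by
    intro t ht
    have htpos : 0 < t := lt_of_lt_of_le hm ht
    exact (Real.hasDerivAt_rpow_const (Or.inl htpos.ne')).hasDerivWithinAt
  have hbound : ∀ t ∈ Ici m, ‖-β * t ^ (-β - 1)‖ ≤ β * m ^ (-β - 1) := by
    intro t ht
    have htpos : 0 < t := lt_of_lt_of_le hm ht
    rw [norm_mul, norm_neg, Real.norm_eq_abs, Real.norm_eq_abs,
      abs_of_nonneg (by linarith), abs_of_nonneg (Real.rpow_nonneg htpos.le _)]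
    have : t ^ (-β - 1) ≤ m ^ (-β - 1) :=
      Real.rpow_le_rpow_of_nonpos hm ht (by linarith)
    nlinarith [Real.rpow_nonneg htpos.le (-β - 1)]
  have := (convex_Ici m).norm_image_sub_le_of_norm_hasDerivWithin_le
    hderiv hbound hy hx
  rw [Real.norm_eq_abs, Real.norm_eq_abs, abs_sub_comm x y] at this
  calc |x ^ (-β) - y ^ (-β)| ≤ β * m ^ (-β - 1) * |y - x| := this
    _ = β * m ^ (-β - 1) * |x - y| := by rw [abs_sub_comm]

lemma tendsto_rpow_exponent {x : ℝ} (hx : 0 < x) :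
    Tendsto (fun β : ℝ => x ^ (-β)) (𝓝[>] (1:ℝ)) (𝓝 (x ^ (-1 : ℝ))) := by
  have hc : Continuous (fun β : ℝ => x ^ (-β)) := by
    have : (fun β : ℝ => x ^ (-β)) = fun β => Real.exp (Real.log x * (-β)) := by
      funext β
      rw [Real.rpow_def_of_pos hx]
    rw [this]
    exact Real.continuous_exp.comp ((continuous_const.mul continuous_neg))
  exact (hc.tendsto 1).mono_left nhdsWithin_le_nhds

lemma summable_inv_rpow {a : ℕ → ℝ} {c : ℝ} (hc : 0 < c)
    (ha : ∀ᶠ k : ℕ in atTop, c * ((k:ℝ)+1) ≤ a k) (hpos : ∀ k, 0 < a k)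
    {β : ℝ} (hβ : 1 < β) : Summable (fun k => a k ^ (-β)) := by
  refine summable_of_isBigO_nat (summable_shift_rpow (show -β < -1 by linarith)) ?_
  rw [Asymptotics.isBigO_iff]
  refine ⟨c ^ (-β), ?_⟩
  filter_upwards [ha] with k hk
  have hk1 : (0:ℝ) < (k:ℝ) + 1 := by positivity
  rw [Real.norm_eq_abs, Real.norm_eq_abs, abs_of_nonneg (Real.rpow_nonneg (hpos k).le _),
    abs_of_nonneg (Real.rpow_nonneg hk1.le _)]
  have h1 : a k ^ (-β) ≤ (c * ((k:ℝ)+1)) ^ (-β) :=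
    Real.rpow_le_rpow_of_nonpos (by positivity) hk (by linarith)
  rw [Real.mul_rpow hc.le hk1.le] at h1
  linarith

lemma core_limit (a : ℕ → ℝ) (hpos : ∀ k, 0 < a k) (C : ℝ) (hC : 1 ≤ C)
    (hdev : ∀ k, |a k - ((k:ℝ)+1)| ≤ C * ((k:ℝ)+1) ^ (0.9:ℝ)) :
    ∃ L : ℝ, Tendsto (fun β : ℝ => (∑' k : ℕ, a k ^ (-β)) - ∑' n : ℕ, ((n:ℝ)+1) ^ (-β))
      (𝓝[>] (1:ℝ)) (𝓝 L) := by
  have htend01 : Tendsto (fun k : ℕ => ((k:ℝ)+1) ^ (0.1:ℝ)) atTop atTop :=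
    (tendsto_rpow_atTop (by norm_num)).comp
      (tendsto_atTop_add_const_right _ 1 tendsto_natCast_atTop_atTop)
  have hlow : ∀ᶠ k : ℕ in atTop, ((k:ℝ)+1)/2 ≤ a k := by
    filter_upwards [htend01.eventually_ge_atTop (2*C)] with k hk
    have hk1 : (0:ℝ) < (k:ℝ)+1 := by positivity
    have hsplit : ((k:ℝ)+1) ^ (0.9:ℝ) * ((k:ℝ)+1) ^ (0.1:ℝ) = (k:ℝ)+1 := by
      rw [← Real.rpow_add hk1]
      norm_num
    have h09 : (0:ℝ) ≤ ((k:ℝ)+1) ^ (0.9:ℝ) := Real.rpow_nonneg hk1.le _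
    have h2 : 2*C*(((k:ℝ)+1) ^ (0.9:ℝ)) ≤ (k:ℝ)+1 := by
      calc 2*C*(((k:ℝ)+1) ^ (0.9:ℝ)) ≤ ((k:ℝ)+1) ^ (0.1:ℝ) * ((k:ℝ)+1) ^ (0.9:ℝ) :=
            mul_le_mul_of_nonneg_right hk h09
        _ = (k:ℝ)+1 := by rw [mul_comm]; exact hsplit
    have := (abs_le.mp (hdev k)).1
    linarith
  set m : ℕ → ℝ := fun k => min (a k) (((k:ℝ)+1)/2) with hmdef
  have hmpos : ∀ k, 0 < m k := fun k => lt_min (hpos k) (by positivity)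
  set g : ℕ → ℝ := fun k =>
    2 * ((m k) ^ (-3:ℝ) + (m k) ^ (-2:ℝ)) * (C * ((k:ℝ)+1) ^ (0.9:ℝ)) with hgdef
  have hmexp : ∀ (k : ℕ) (β : ℝ), 1 < β → β ≤ 2 →
      (m k) ^ (-β-1) ≤ (m k) ^ (-3:ℝ) + (m k) ^ (-2:ℝ) := by
    intro k β hβ1 hβ2
    rcases le_or_gt (m k) 1 with hm1 | hm1
    · have h := Real.rpow_le_rpow_of_exponent_ge (hmpos k) hm1
        (show (-3:ℝ) ≤ -β-1 by linarith)
      have := Real.rpow_nonneg (hmpos k).le (-2:ℝ)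
      linarith
    · have h := Real.rpow_le_rpow_of_exponent_le hm1.le
        (show -β-1 ≤ (-2:ℝ) by linarith)
      have := Real.rpow_nonneg (hmpos k).le (-3:ℝ)
      linarith
  have hgbound : ∀ β : ℝ, β ∈ Ioc (1:ℝ) 2 → ∀ k : ℕ,
      |a k ^ (-β) - ((k:ℝ)+1) ^ (-β)| ≤ g k := by
    intro β hβ k
    have hk1 : (0:ℝ) < (k:ℝ)+1 := by positivity
    have h1 := abs_rpow_sub_rpow_le (hmpos k) (min_le_left _ _)
      ((min_le_right _ _).trans (by linarith : ((k:ℝ)+1)/2 ≤ ((k:ℝ)+1))) (le_of_lt hβ.1)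
    refine le_trans h1 ?_
    have h2 := hmexp k β hβ.1 hβ.2
    have h3 := hdev k
    have hb0 : (0:ℝ) < β := by linarith [hβ.1]
    have hm0 := Real.rpow_nonneg (hmpos k).le (-β-1)
    have habs0 : (0:ℝ) ≤ |a k - ((k:ℝ)+1)| := abs_nonneg _
    have h09 : (0:ℝ) ≤ C * ((k:ℝ)+1) ^ (0.9:ℝ) := by
      have := Real.rpow_nonneg hk1.le (0.9:ℝ)
      nlinarith
    calc β * (m k) ^ (-β-1) * |a k - ((k:ℝ)+1)|
        ≤ β * (m k) ^ (-β-1) * (C * ((k:ℝ)+1) ^ (0.9:ℝ)) := by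
          apply mul_le_mul_of_nonneg_left h3
          nlinarith
      _ ≤ 2 * ((m k) ^ (-3:ℝ) + (m k) ^ (-2:ℝ)) * (C * ((k:ℝ)+1) ^ (0.9:ℝ)) := by
          apply mul_le_mul_of_nonneg_right _ h09
          have hβ2 := hβ.2
          nlinarith
  have hgsummable : Summable g := by
    refine summable_of_isBigO_nat
      (summable_shift_rpow (show (-1.1:ℝ) < -1 by norm_num)) ?_
    rw [Asymptotics.isBigO_iff]
    refine ⟨32 * C, ?_⟩
    have h2inv : (2:ℝ) ^ (-2:ℝ) = 1/4 := by
      rw [show (-2:ℝ) = ((-2:ℤ):ℝ) by norm_num, Real.rpow_intCast]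
      norm_num
    filter_upwards [hlow, eventually_ge_atTop 1] with k hk hk1n
    have hk1 : (0:ℝ) < (k:ℝ)+1 := by positivity
    have hmk : ((k:ℝ)+1)/2 ≤ m k := le_min hk (le_refl _)
    have hm1 : (1:ℝ) ≤ m k := by
      have : (1:ℝ) ≤ ((k:ℝ)+1)/2 := by
        have : (1:ℝ) ≤ (k:ℝ) := by exact_mod_cast hk1n
        linarith
      linarith
    have hup2 : (m k) ^ (-2:ℝ) ≤ 4 * ((k:ℝ)+1) ^ (-2:ℝ) := by
      have h := Real.rpow_le_rpow_of_nonpos (by positivity) hmk (by norm_num : (-2:ℝ) ≤ 0)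
      rw [Real.div_rpow hk1.le (by norm_num : (0:ℝ) ≤ 2), h2inv] at h
      calc (m k) ^ (-2:ℝ) ≤ ((k:ℝ)+1) ^ (-2:ℝ) / (1/4) := h
        _ = 4 * ((k:ℝ)+1) ^ (-2:ℝ) := by ring
    have hup3 : (m k) ^ (-3:ℝ) ≤ (m k) ^ (-2:ℝ) :=
      Real.rpow_le_rpow_of_exponent_le hm1 (by norm_num)
    have hcomb : ((k:ℝ)+1) ^ (-2:ℝ) * ((k:ℝ)+1) ^ (0.9:ℝ) = ((k:ℝ)+1) ^ (-1.1:ℝ) := by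
      rw [← Real.rpow_add hk1]
      norm_num
    have hgk : g k ≤ 32 * C * ((k:ℝ)+1) ^ (-1.1:ℝ) := by
      have hC09 : (0:ℝ) ≤ ((k:ℝ)+1) ^ (0.9:ℝ) := Real.rpow_nonneg hk1.le _
      have hn2 : (0:ℝ) ≤ ((k:ℝ)+1) ^ (-2:ℝ) := Real.rpow_nonneg hk1.le _
      calc g k = 2 * ((m k) ^ (-3:ℝ) + (m k) ^ (-2:ℝ)) * (C * ((k:ℝ)+1) ^ (0.9:ℝ)) := rfl
        _ ≤ 2 * (8 * ((k:ℝ)+1) ^ (-2:ℝ)) * (C * ((k:ℝ)+1) ^ (0.9:ℝ)) := by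
            apply mul_le_mul_of_nonneg_right _ (by nlinarith)
            nlinarith
        _ = 16 * C * (((k:ℝ)+1) ^ (-2:ℝ) * ((k:ℝ)+1) ^ (0.9:ℝ)) := by ring
        _ = 16 * C * ((k:ℝ)+1) ^ (-1.1:ℝ) := by rw [hcomb]
        _ ≤ 32 * C * ((k:ℝ)+1) ^ (-1.1:ℝ) := by
            have : (0:ℝ) ≤ ((k:ℝ)+1) ^ (-1.1:ℝ) := Real.rpow_nonneg hk1.le _
            nlinarith
    have hgnn : 0 ≤ g k := by
      have h3 := Real.rpow_nonneg (hmpos k).le (-3:ℝ)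
      have h2 := Real.rpow_nonneg (hmpos k).le (-2:ℝ)
      have h9 := Real.rpow_nonneg hk1.le (0.9:ℝ)
      apply mul_nonneg (by nlinarith) (by nlinarith)
    rw [Real.norm_eq_abs, Real.norm_eq_abs, abs_of_nonneg hgnn,
      abs_of_nonneg (Real.rpow_nonneg hk1.le _)]
    exact hgk
  have htendsto : ∀ k : ℕ, Tendsto (fun β : ℝ => a k ^ (-β) - ((k:ℝ)+1) ^ (-β))
      (𝓝[>] (1:ℝ)) (𝓝 (a k ^ (-1:ℝ) - ((k:ℝ)+1) ^ (-1:ℝ))) := by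
    intro k
    exact (tendsto_rpow_exponent (hpos k)).sub
      (tendsto_rpow_exponent (by positivity))
  have main := tendsto_tsum_of_dominated_convergence hgsummable htendsto ?hb
  case hb =>
    filter_upwards [Ioc_mem_nhdsGT_of_mem (Set.left_mem_Ico.mpr one_lt_two)] with β hβ
    intro k
    rw [Real.norm_eq_abs]
    exact hgbound β hβ k
  refine ⟨_, main.congr' ?_⟩
  filter_upwards [self_mem_nhdsWithin] with β (hβ : 1 < β)
  have hsa : Summable (fun k => a k ^ (-β)) := by
    refine summable_inv_rpow (c := 1/2) (by norm_num) ?_ hpos hβ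
    filter_upwards [hlow] with k hk
    linarith
  have hsb : Summable (fun n : ℕ => ((n:ℝ)+1) ^ (-β)) :=
    summable_shift_rpow (show -β < -1 by linarith)
  exact Summable.tsum_sub hsa hsb

lemma zeta_series_limit : ∃ c : ℝ,
    Tendsto (fun β : ℝ => (∑' n : ℕ, ((n:ℝ)+1) ^ (-β)) - 1/(β-1)) (𝓝[>] (1:ℝ)) (𝓝 c) := by
  have aux2 : Tendsto (fun s : ℝ => (∑' n : ℕ, 1 / ((n:ℝ) + 1) ^ s) - 1 / (s - 1))
      (𝓝[>] (1:ℝ)) (𝓝 (1 - 1 * ZetaAsymptotics.term_tsum 1)) := by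
    apply Tendsto.congr'
    · filter_upwards [self_mem_nhdsWithin] with s hs
      exact (ZetaAsymptotics.zeta_limit_aux1 hs).symm
    · apply tendsto_const_nhds.sub
      apply Tendsto.mul (tendsto_id.mono_left nhdsWithin_le_nhds)
      exact Tendsto.mono_left
        (ZetaAsymptotics.continuousOn_term_tsum.continuousWithinAt self_mem_Ici)
        (nhdsWithin_mono _ Ioi_subset_Ici_self)
  refine ⟨_, aux2.congr (fun β => ?_)⟩
  congr 1
  exact tsum_congr (fun n => by
    rw [Real.rpow_neg (by positivity), one_div])

/-- with `(η_k)` the points of a rate-1 Poisson point process on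
`(0,∞)` in increasing order (partial sums of i.i.d. exponential(1) variables)
and `Z(β) = ∑ η_k^{-β}`, almost surely `lim_{β↓1} (Z(β) - ζ(β))` exists and is
finite; consequently `Z(β) = 1/(β-1) + W + o(1)` a.s. as `β ↓ 1` for some
random variable `W`. -/
theorem Z_minus_zeta_converges
    {Ω : Type*} [MeasureSpace Ω] [IsProbabilityMeasure (ℙ : Measure Ω)]
    (E : ℕ → Ω → ℝ) (hmeas : ∀ i, Measurable (E i))
    (hindep : iIndepFun E ℙ)
    (hdist : ∀ i, Measure.map (E i) ℙ = expMeasure 1)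
    (η : ℕ → Ω → ℝ) (hη : ∀ k ω, η k ω = ∑ i ∈ Finset.range (k + 1), E i ω)
    (Z : ℝ → Ω → ℝ) (hZ : ∀ β ω, Z β ω = ∑' k : ℕ, η k ω ^ (-β))
    :
    (∀ᵐ ω ∂ℙ, ∃ L : ℝ,
        Tendsto (fun β : ℝ => Z β ω - ∑' n : ℕ, ((n : ℝ) + 1) ^ (-β))
          (𝓝[>] (1 : ℝ)) (𝓝 L)) ∧
    ∃ W : Ω → ℝ, ∀ᵐ ω ∂ℙ,
        Tendsto (fun β : ℝ => Z β ω - 1 / (β - 1)) (𝓝[>] (1 : ℝ)) (𝓝 (W ω)) := by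
  have part1 : ∀ᵐ ω ∂ℙ, ∃ L : ℝ,
      Tendsto (fun β : ℝ => Z β ω - ∑' n : ℕ, ((n : ℝ) + 1) ^ (-β))
        (𝓝[>] (1 : ℝ)) (𝓝 L) := by
    filter_upwards [eta_structure_ae E hmeas hindep hdist] with ω hω
    obtain ⟨hωpos, C, hC1, hCdev⟩ := hω
    obtain ⟨L, hL⟩ := core_limit (fun k => η k ω)
      (fun k => by rw [hη]; exact hωpos k) C hC1
      (fun k => by rw [hη]; exact hCdev k)
    refine ⟨L, hL.congr (fun β => ?_)⟩
    rw [hZ]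
  obtain ⟨c, hc⟩ := zeta_series_limit
  refine ⟨part1, ?_⟩
  classical
  refine ⟨fun ω => if h : ∃ L : ℝ, Tendsto (fun β : ℝ => Z β ω - 1/(β-1))
    (𝓝[>] (1:ℝ)) (𝓝 L) then h.choose else 0, ?_⟩
  filter_upwards [part1] with ω hω
  obtain ⟨L, hL⟩ := hω
  have h2 : Tendsto (fun β : ℝ => Z β ω - 1/(β-1)) (𝓝[>] (1:ℝ)) (𝓝 (L + c)) := by
    refine (hL.add hc).congr (fun β => ?_)
    ring
  have hex : ∃ L' : ℝ, Tendsto (fun β : ℝ => Z β ω - 1/(β-1))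
      (𝓝[>] (1:ℝ)) (𝓝 L') := ⟨L + c, h2⟩
  simp only [dif_pos hex]
  exact hex.choose_spec
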